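/- Let n ≥ 3, and in A[B_n] set δ = r_{n−1} r_{n−2} ⋯ r_2 r_1^2 r_2 ⋯ r_{n−2} r_{n−1} and δ' = r_{n−1}^{−1} δ r_{n−1}^{−1} = r_{n−2} ⋯ r_2 r_1^2 r_2 ⋯ r_{n−2}. Then δ δ' = δ' δ, and equivalently the Artin relation of length four δ' r_{n−1} δ' r_{n−1} = r_{n−1} δ' r_{n−1} δ' holds in A[B_n]. -/

import Mathlib

/-- The defining relators of the Artin group of type `Bₙ`, as elements of the free
group on `n` generators (0-indexed: generator `i` corresponds to `r_{i+1}`). -/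
def BnRels (n : ℕ) : Set (FreeGroup (Fin n)) :=
  {w | (∃ i j : Fin n, (i : ℕ) + 1 = (j : ℕ) ∧ (j : ℕ) + 1 < n ∧
          w = FreeGroup.of i * FreeGroup.of j * FreeGroup.of i *
              (FreeGroup.of j * FreeGroup.of i * FreeGroup.of j)⁻¹) ∨
       (∃ i j : Fin n, (i : ℕ) + 2 = n ∧ (j : ℕ) + 1 = n ∧
          w = FreeGroup.of i * FreeGroup.of j * FreeGroup.of i * FreeGroup.of j *
              (FreeGroup.of j * FreeGroup.of i * FreeGroup.of j * FreeGroup.of i)⁻¹) ∨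
       (∃ i j : Fin n, (i : ℕ) + 2 ≤ (j : ℕ) ∧
          w = FreeGroup.of i * FreeGroup.of j * (FreeGroup.of j * FreeGroup.of i)⁻¹)}

/-- The Artin group `A[Bₙ]` of type `Bₙ`. -/
abbrev ArtinB (n : ℕ) := PresentedGroup (BnRels n)

/-- The standard generator `r_i` (1-indexed, `1 ≤ i ≤ n`). -/
def rB (n i : ℕ) : ArtinB n :=
  if h : i - 1 < n then PresentedGroup.of ⟨i - 1, h⟩ else 1

/-- `ρ_B = r_1 r_2 ⋯ r_n`. -/
def ρB (n : ℕ) : ArtinB n := ((List.range n).map fun i => rB n (i + 1)).prod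

/-- `Δ_B = ρ_B ^ n`, the generator of the center. -/
def ΔB (n : ℕ) : ArtinB n := ρB n ^ n

/-- `t_i` for `i` read modulo `n`: `t_i = r_i` for `1 ≤ i ≤ n-1`,
and `t_0 = ρ_B r_{n-1} ρ_B⁻¹`. -/
def tB (n i : ℕ) : ArtinB n :=
  if i % n = 0 then ρB n * rB n (n - 1) * (ρB n)⁻¹ else rB n (i % n)

/-- `Δ_Y = (t_1⋯t_{n-1})(t_1⋯t_{n-2})⋯(t_1t_2)t_1`, the Garside element of the
parabolic subgroup of type `A_{n-1}`. -/
def ΔY (n : ℕ) : ArtinB n :=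
  ((List.range (n - 1)).map fun k =>
    ((List.range (n - 1 - k)).map fun i => rB n (i + 1)).prod).prod

/-- `ρ_0 = t_1 t_2 ⋯ t_{n-1}`. -/
def ρ₀B (n : ℕ) : ArtinB n := ((List.range (n - 1)).map fun i => rB n (i + 1)).prod

/-- `ρ_1 = t_1⁻¹ t_2⁻¹ ⋯ t_{n-1}⁻¹`. -/
def ρ₁B (n : ℕ) : ArtinB n := ((List.range (n - 1)).map fun i => (rB n (i + 1))⁻¹).prod

/-- `ρ_k` for `k ∈ {0,1}`. -/
def ρkB (n k : ℕ) : ArtinB n := if k = 0 then ρ₀B n else ρ₁B n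

/-- `v_k = ρ_k t_{n-1} ρ_k⁻¹` for `k ∈ {0,1}`. -/
def vB (n k : ℕ) : ArtinB n := ρkB n k * rB n (n - 1) * (ρkB n k)⁻¹

/-- `δ = r_{n-1} r_{n-2} ⋯ r_2 r_1² r_2 ⋯ r_{n-2} r_{n-1}`. -/
def δB (n : ℕ) : ArtinB n :=
  ((List.range (n - 2)).map fun i => rB n (n - 1 - i)).prod * rB n 1 ^ 2 *
  ((List.range (n - 2)).map fun i => rB n (i + 2)).prod

/-- The quotient `Ā = A[Bₙ]/Z(A[Bₙ])`. -/
abbrev AbarB (n : ℕ) := ArtinB n ⧸ Subgroup.center (ArtinB n)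

/-- The canonical projection `π : A[Bₙ] → Ā`. -/
def πB (n : ℕ) : ArtinB n →* AbarB n := QuotientGroup.mk' (Subgroup.center (ArtinB n))

/-- `t̄_i = π(t_i)`. -/
def tbar (n i : ℕ) : AbarB n := πB n (tB n i)

/-- `ρ̄_B = π(ρ_B)`. -/
def ρbar (n : ℕ) : AbarB n := πB n (ρB n)

/-- The composition `conj_x ∘ φ` of an endomorphism with an inner automorphism. -/
def conjComp {G : Type*} [Group G] (x : G) (φ : G →* G) : G →* G :=
  (MulAut.conj x).toMonoidHom.comp φ

/-- Type (1): there are commuting `g, h` with `φ(t_i) = g` for all `0 ≤ i ≤ n-1`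
and `φ(ρ_B) = h`. -/
def IsType1 (n : ℕ) (φ : ArtinB n →* ArtinB n) : Prop :=
  ∃ g h : ArtinB n, g * h = h * g ∧ (∀ i < n, φ (tB n i) = g) ∧ φ (ρB n) = h

/-- Type (2a) with parameters `ε ∈ {1,-1}`, `p q : ℤ`. -/
def IsType2a (n : ℕ) (ε p q : ℤ) (φ : ArtinB n →* ArtinB n) : Prop :=
  (ε = 1 ∨ ε = -1) ∧ (∀ i < n, φ (tB n i) = tB n i ^ ε * ΔB n ^ p) ∧
    φ (ρB n) = ρB n * ΔB n ^ q

/-- Type (2b) with parameters `ε ∈ {1,-1}`, `p q : ℤ`. -/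
def IsType2b (n : ℕ) (ε p q : ℤ) (φ : ArtinB n →* ArtinB n) : Prop :=
  (ε = 1 ∨ ε = -1) ∧ (∀ i < n, φ (tB n i) = tB n (n - i) ^ ε * ΔB n ^ p) ∧
    φ (ρB n) = (ρB n)⁻¹ * ΔB n ^ q

/-- Type (3) with parameters `ε ∈ {1,-1}`, `k ∈ {0,1}`, `p q r s : ℤ`. -/
def IsType3 (n : ℕ) (ε : ℤ) (k : ℕ) (p q r s : ℤ) (φ : ArtinB n →* ArtinB n) : Prop :=
  (ε = 1 ∨ ε = -1) ∧ (k = 0 ∨ k = 1) ∧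
    (∀ i, 1 ≤ i → i ≤ n - 1 → φ (tB n i) = tB n i ^ ε * ΔY n ^ (2 * p) * ΔB n ^ q) ∧
    φ (tB n 0) = vB n k ^ ε * ΔY n ^ (2 * p) * ΔB n ^ q ∧
    φ (ρB n) = ρkB n k * ΔY n ^ (2 * r) * ΔB n ^ s

/-- with `δ' = r_{n-1}⁻¹ δ r_{n-1}⁻¹ = r_{n-2} ⋯ r_2 r_1² r_2 ⋯ r_{n-2}`,
one has `δ δ' = δ' δ`, equivalently the Artin relation of length four between
`δ'` and `r_{n-1}` holds in `A[Bₙ]`, `n ≥ 3`. -/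
lemma braidB (n : ℕ) (i j : Fin n) (h1 : (i : ℕ) + 1 = j) (h2 : (j : ℕ) + 1 < n) :
    (PresentedGroup.of i : ArtinB n) * PresentedGroup.of j * PresentedGroup.of i =
      PresentedGroup.of j * PresentedGroup.of i * PresentedGroup.of j := by
  have hw : FreeGroup.of i * FreeGroup.of j * FreeGroup.of i *
      (FreeGroup.of j * FreeGroup.of i * FreeGroup.of j)⁻¹ ∈ BnRels n :=
    Or.inl ⟨i, j, h1, h2, rfl⟩
  have h : PresentedGroup.mk (BnRels n) (FreeGroup.of i * FreeGroup.of j * FreeGroup.of i *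
      (FreeGroup.of j * FreeGroup.of i * FreeGroup.of j)⁻¹) = 1 :=
    (QuotientGroup.eq_one_iff _).mpr (Subgroup.subset_normalClosure hw)
  simp only [map_mul, map_inv] at h
  exact mul_inv_eq_one.mp h

lemma commB (n : ℕ) (i j : Fin n) (h1 : (i : ℕ) + 2 ≤ (j : ℕ)) :
    (PresentedGroup.of i : ArtinB n) * PresentedGroup.of j =
      PresentedGroup.of j * PresentedGroup.of i := by
  have hw : FreeGroup.of i * FreeGroup.of j * (FreeGroup.of j * FreeGroup.of i)⁻¹ ∈ BnRels n :=
    Or.inr (Or.inr ⟨i, j, h1, rfl⟩)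
  have h : PresentedGroup.mk (BnRels n) (FreeGroup.of i * FreeGroup.of j *
      (FreeGroup.of j * FreeGroup.of i)⁻¹) = 1 :=
    (QuotientGroup.eq_one_iff _).mpr (Subgroup.subset_normalClosure hw)
  simp only [map_mul, map_inv] at h
  exact mul_inv_eq_one.mp h

lemma rB_eq (n i : ℕ) (h : i - 1 < n) : rB n i = PresentedGroup.of ⟨i - 1, h⟩ := dif_pos h

lemma rB_braid (n p : ℕ) (hp : 1 ≤ p) (h : p + 1 < n) :
    rB n p * rB n (p + 1) * rB n p = rB n (p + 1) * rB n p * rB n (p + 1) := by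
  have h1 : p - 1 < n := by omega
  have h2 : p + 1 - 1 < n := by omega
  rw [rB_eq n p h1, rB_eq n (p+1) h2]
  exact braidB n ⟨p-1, h1⟩ ⟨p+1-1, h2⟩ (by simp; omega) (by simp; omega)

lemma rB_comm (n p q : ℕ) (hp : 1 ≤ p) (h : p + 2 ≤ q) (hq : q ≤ n) :
    rB n p * rB n q = rB n q * rB n p := by
  have h1 : p - 1 < n := by omega
  have h2 : q - 1 < n := by omega
  rw [rB_eq n p h1, rB_eq n q h2]
  exact commB n ⟨p-1, h1⟩ ⟨q-1, h2⟩ (by simp; omega)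


lemma key {G : Type*} [Group G] (a b c : G)
    (hbr : a*b*a = b*a*b) (hbc : b*c = c*b) (hih : c*a*c*a = a*c*a*c) :
    a*c*a*b*(a*c*a)*b = b*(a*c*a)*b*(a*c*a) := by
  calc a*c*a*b*(a*c*a)*b
      = a*c*(a*b*a)*(c*(a*b)) := by simp only [mul_assoc]
    _ = a*c*(b*a*b)*(c*(a*b)) := by rw [hbr]
    _ = a*c*(b*a)*(b*c)*(a*b) := by simp only [mul_assoc]
    _ = a*c*(b*a)*(c*b)*(a*b) := by rw [hbc]
    _ = a*(c*b)*(a*c)*(b*a*b) := by simp only [mul_assoc]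
    _ = a*(b*c)*(a*c)*(b*a*b) := by rw [← hbc]
    _ = a*b*(c*a*c)*(b*a*b) := by simp only [mul_assoc]
    _ = a*b*(c*a*c)*(a*b*a) := by rw [← hbr]
    _ = a*b*(c*a*c*a)*(b*a) := by simp only [mul_assoc]
    _ = a*b*(a*c*a*c)*(b*a) := by rw [hih]
    _ = (a*b*a)*(c*a*c)*(b*a) := by simp only [mul_assoc]
    _ = (b*a*b)*(c*a*c)*(b*a) := by rw [hbr]
    _ = b*a*(b*c)*(a*c*(b*a)) := by simp only [mul_assoc]
    _ = b*a*(c*b)*(a*c*(b*a)) := by rw [hbc]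
    _ = b*a*c*(b*a)*(c*b)*a := by simp only [mul_assoc]
    _ = b*a*c*(b*a)*(b*c)*a := by rw [← hbc]
    _ = b*a*c*(b*a*b)*(c*a) := by simp only [mul_assoc]
    _ = b*a*c*(a*b*a)*(c*a) := by rw [← hbr]
    _ = b*(a*c*a)*b*(a*c*a) := by simp only [mul_assoc]

lemma key0 {G : Type*} [Group G] (a b : G) (hbr : a*b*a = b*a*b) :
    a^2*b*(a^2)*b = b*(a^2)*b*(a^2) := by
  calc a^2*b*(a^2)*b
      = a*(a*b*a)*(a*b) := by simp only [pow_two, mul_assoc]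
    _ = a*(b*a*b)*(a*b) := by rw [hbr]
    _ = (a*b*a)*(b*a*b) := by simp only [mul_assoc]
    _ = (b*a*b)*(a*b*a) := by rw [hbr]
    _ = b*a*(b*a*b)*a := by simp only [mul_assoc]
    _ = b*a*(a*b*a)*a := by rw [← hbr]
    _ = b*(a^2)*b*(a^2) := by simp only [pow_two, mul_assoc]

def ZB (n : ℕ) : ℕ → ArtinB n
  | 0 => rB n 1 ^ 2
  | k + 1 => rB n (k + 2) * ZB n k * rB n (k + 2)

lemma ZB_eq (n : ℕ) : ∀ k, ZB n k =
    ((List.range k).map fun i => rB n (k + 1 - i)).prod * rB n 1 ^ 2 *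
      ((List.range k).map fun i => rB n (i + 2)).prod
  | 0 => by simp [ZB]
  | k + 1 => by
    have hD : ((List.range (k+1)).map fun i => rB n (k + 1 + 1 - i)).prod =
        rB n (k + 2) * ((List.range k).map fun i => rB n (k + 1 - i)).prod := by
      rw [List.range_succ_eq_map, List.map_cons, List.prod_cons, List.map_map]
      congr 1
      exact congrArg _ (List.map_congr_left fun i hi => by
          simp only [Function.comp]; congr 1; omega)
    have hU : ((List.range (k+1)).map fun i => rB n (i + 2)).prod =
        ((List.range k).map fun i => rB n (i + 2)).prod * rB n (k + 2) := by
      rw [List.range_succ, List.map_append, List.prod_append]; simp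
    show rB n (k + 2) * ZB n k * rB n (k + 2) = _
    rw [hD, hU, ZB_eq n k]
    simp only [mul_assoc]

lemma rB_comm_ZB (n q : ℕ) (hq : q ≤ n) : ∀ k, k + 3 ≤ q → rB n q * ZB n k = ZB n k * rB n q
  | 0, h => by
    have hc := rB_comm n 1 q (by omega) (by omega) hq
    show rB n q * rB n 1 ^ 2 = rB n 1 ^ 2 * rB n q
    calc rB n q * rB n 1 ^ 2 = (rB n q * rB n 1) * rB n 1 := by
          simp only [pow_two, mul_assoc]
      _ = (rB n 1 * rB n q) * rB n 1 := by rw [← hc]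
      _ = rB n 1 * (rB n q * rB n 1) := by simp only [mul_assoc]
      _ = rB n 1 * (rB n 1 * rB n q) := by rw [← hc]
      _ = rB n 1 ^ 2 * rB n q := by simp only [pow_two, mul_assoc]
  | k + 1, h => by
    have hc := rB_comm n (k + 2) q (by omega) (by omega) hq
    have ih := rB_comm_ZB n q hq k (by omega)
    show rB n q * (rB n (k+2) * ZB n k * rB n (k+2)) = rB n (k+2) * ZB n k * rB n (k+2) * rB n q
    calc rB n q * (rB n (k+2) * ZB n k * rB n (k+2))
        = (rB n q * rB n (k+2)) * ZB n k * rB n (k+2) := by simp only [mul_assoc]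
      _ = rB n (k+2) * (rB n q * ZB n k) * rB n (k+2) := by rw [← hc]; simp only [mul_assoc]
      _ = rB n (k+2) * (ZB n k * rB n q) * rB n (k+2) := by rw [ih]
      _ = rB n (k+2) * ZB n k * (rB n q * rB n (k+2)) := by simp only [mul_assoc]
      _ = rB n (k+2) * ZB n k * (rB n (k+2) * rB n q) := by rw [← hc]
      _ = rB n (k+2) * ZB n k * rB n (k+2) * rB n q := by simp only [mul_assoc]

lemma ZB_four (n : ℕ) : ∀ k, k + 3 ≤ n →
    ZB n k * rB n (k + 2) * ZB n k * rB n (k + 2) =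
      rB n (k + 2) * ZB n k * rB n (k + 2) * ZB n k
  | 0, h => by
    have hbr := rB_braid n 1 (by omega) (by omega)
    show rB n 1 ^ 2 * rB n 2 * rB n 1 ^ 2 * rB n 2 = _
    have := key0 (rB n 1) (rB n 2) hbr
    simpa [mul_assoc, ZB] using this
  | k + 1, h => by
    have hbr := rB_braid n (k + 2) (by omega) (by omega)
    have hbc := rB_comm_ZB n (k + 3) (by omega) k (by omega)
    have hih := ZB_four n k (by omega)
    show rB n (k+2) * ZB n k * rB n (k+2) * rB n (k+3) * (rB n (k+2) * ZB n k * rB n (k+2)) * rB n (k+3)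
       = rB n (k+3) * (rB n (k+2) * ZB n k * rB n (k+2)) * rB n (k+3) * (rB n (k+2) * ZB n k * rB n (k+2))
    exact key (rB n (k+2)) (rB n (k+3)) (ZB n k) hbr hbc hih

theorem delta_delta_prime_commute (n : ℕ) (hn : 3 ≤ n) :
    (rB n (n - 1))⁻¹ * δB n * (rB n (n - 1))⁻¹ =
      ((List.range (n - 3)).map fun i => rB n (n - 2 - i)).prod * rB n 1 ^ 2 *
        ((List.range (n - 3)).map fun i => rB n (i + 2)).prod ∧
    δB n * ((rB n (n - 1))⁻¹ * δB n * (rB n (n - 1))⁻¹) =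
      ((rB n (n - 1))⁻¹ * δB n * (rB n (n - 1))⁻¹) * δB n ∧
    ((rB n (n - 1))⁻¹ * δB n * (rB n (n - 1))⁻¹) * rB n (n - 1) *
        ((rB n (n - 1))⁻¹ * δB n * (rB n (n - 1))⁻¹) * rB n (n - 1) =
      rB n (n - 1) * ((rB n (n - 1))⁻¹ * δB n * (rB n (n - 1))⁻¹) *
        rB n (n - 1) * ((rB n (n - 1))⁻¹ * δB n * (rB n (n - 1))⁻¹) := by
  obtain ⟨m, rfl⟩ : ∃ m, n = m + 3 := ⟨n - 3, by omega⟩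
  simp only [show m + 3 - 1 = m + 2 from rfl, show m + 3 - 2 = m + 1 from rfl,
    show m + 3 - 3 = m from rfl]
  have hδ : δB (m + 3) = rB (m + 3) (m + 2) * ZB (m + 3) m * rB (m + 3) (m + 2) := by
    show δB (m + 3) = ZB (m + 3) (m + 1)
    rw [δB, ZB_eq]
    simp only [show m + 3 - 1 = m + 2 from rfl, show m + 3 - 2 = m + 1 from rfl,
      show m + 1 + 1 = m + 2 from rfl]
  have hZ : ((List.range m).map fun i => rB (m + 3) (m + 1 - i)).prod * rB (m + 3) 1 ^ 2 *
      ((List.range m).map fun i => rB (m + 3) (i + 2)).prod = ZB (m + 3) m :=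
    (ZB_eq (m + 3) m).symm
  have h1 : (rB (m + 3) (m + 2))⁻¹ * δB (m + 3) * (rB (m + 3) (m + 2))⁻¹ = ZB (m + 3) m := by
    rw [hδ]; group
  have h4 := ZB_four (m + 3) m (by omega)
  refine ⟨?_, ?_, ?_⟩
  · rw [h1, hZ]
  · rw [h1, hδ, ← h4]
    group
  · rw [h1]
    exact h4
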